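/- Let P and Q be orthogonal projections on a complex Hilbert space H. Then the spectral radius of PQ + QP equals ‖PQ‖² + ‖PQ‖. -/

import Mathlib

set_option synthInstance.maxHeartbeats 400000
set_option maxHeartbeats 1000000

open scoped InnerProductSpace ComplexConjugate

section Aux
variable {H : Type*} [NormedAddCommGroup H] [InnerProductSpace ℂ H] [CompleteSpace H]

/-- numerical radius bounds the norm of a self-adjoint operator -/
lemma aux_norm_le (T : H →L[ℂ] H) (hT : IsSelfAdjoint T) {M : ℝ} (hM : 0 ≤ M)
    (h : ∀ x : H, |Complex.re ⟪T x, x⟫_ℂ| ≤ M * ‖x‖ ^ 2) : ‖T‖ ≤ M := by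
  have hsymm := hT.isSymmetric
  have key : ∀ x y : H, Complex.re ⟪T x, y⟫_ℂ ≤ M / 2 * (‖x‖ ^ 2 + ‖y‖ ^ 2) := by
    intro x y
    have h1 := (abs_le.mp (h (x + y))).2
    have h2 := (abs_le.mp (h (x - y))).1
    have e2 : Complex.re ⟪T y, x⟫_ℂ = Complex.re ⟪T x, y⟫_ℂ := by
      have := hsymm y x
      simp only [ContinuousLinearMap.coe_coe] at this
      rw [this]
      exact inner_re_symm (𝕜 := ℂ) _ _
    have e1 : Complex.re ⟪T (x + y), x + y⟫_ℂ - Complex.re ⟪T (x - y), x - y⟫_ℂ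
        = 4 * Complex.re ⟪T x, y⟫_ℂ := by
      simp only [map_add, map_sub, inner_add_left, inner_add_right, inner_sub_left,
        inner_sub_right, Complex.add_re, Complex.sub_re]
      rw [← e2]; ring
    have hpar := parallelogram_law_with_norm ℂ x y
    nlinarith [h1, h2, e1]
  apply T.opNorm_le_bound hM
  intro x
  by_cases hTx : T x = 0
  · simp [hTx]; positivity
  · have hx : x ≠ 0 := by rintro rfl; simp at hTx
    have hTxn : (0:ℝ) < ‖T x‖ := norm_pos_iff.mpr hTx
    have hk := key x (((‖x‖ / ‖T x‖ : ℝ) : ℂ) • T x)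
    rw [inner_smul_right] at hk
    have e3 : Complex.re ((‖x‖ / ‖T x‖ : ℝ) * ⟪T x, T x⟫_ℂ : ℂ)
        = (‖x‖ / ‖T x‖) * ‖T x‖ ^ 2 := by
      have hin : (⟪T x, T x⟫_ℂ).re = ‖T x‖ ^ 2 := by
        simpa using inner_self_eq_norm_sq (𝕜 := ℂ) (T x)
      rw [Complex.re_ofReal_mul, hin]
    have e4 : ‖(((‖x‖ / ‖T x‖ : ℝ) : ℂ)) • T x‖ = ‖x‖ := by
      rw [norm_smul, Complex.norm_real, Real.norm_eq_abs,
        abs_of_nonneg (by positivity), div_mul_cancel₀ _ (ne_of_gt hTxn)]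
    rw [e3, e4] at hk
    have e5 : (‖x‖ / ‖T x‖) * ‖T x‖ ^ 2 = ‖x‖ * ‖T x‖ := by
      field_simp
    rw [e5] at hk
    have hxn : (0:ℝ) < ‖x‖ := norm_pos_iff.mpr hx
    nlinarith [hk]

end Aux

section Aux2
variable {H : Type*} [NormedAddCommGroup H] [InnerProductSpace ℂ H] [CompleteSpace H]

lemma aux_symm {P : H →L[ℂ] H} (hP : IsSelfAdjoint P) (a b : H) :
    ⟪P a, b⟫_ℂ = ⟪a, P b⟫_ℂ := by simpa using hP.isSymmetric a b

omit [CompleteSpace H] in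
lemma aux_idem {P : H →L[ℂ] H} (hP2 : P * P = P) (a : H) : P (P a) = P a := by
  conv_rhs => rw [← hP2]
  rfl

lemma aux_re_self {P : H →L[ℂ] H} (hP : IsSelfAdjoint P) (hP2 : P * P = P) (x : H) :
    Complex.re ⟪P x, x⟫_ℂ = ‖P x‖ ^ 2 := by
  have e : ⟪P x, x⟫_ℂ = ⟪P x, P x⟫_ℂ := by
    conv_lhs => rw [show P x = P (P x) from (aux_idem hP2 x).symm]
    exact aux_symm hP (P x) x
  rw [e]
  simpa using inner_self_eq_norm_sq (𝕜 := ℂ) (P x)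

lemma aux_contr {P : H →L[ℂ] H} (hP : IsSelfAdjoint P) (hP2 : P * P = P) (x : H) :
    ‖P x‖ ≤ ‖x‖ := by
  rcases eq_or_lt_of_le (norm_nonneg (P x)) with h0 | h0
  · rw [← h0]; exact norm_nonneg x
  · have h1 : ‖P x‖ ^ 2 = Complex.re ⟪P x, x⟫_ℂ := (aux_re_self hP hP2 x).symm
    have h2 : Complex.re ⟪P x, x⟫_ℂ ≤ ‖P x‖ * ‖x‖ := by
      calc Complex.re ⟪P x, x⟫_ℂ ≤ |Complex.re ⟪P x, x⟫_ℂ| := le_abs_self _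
        _ ≤ ‖⟪P x, x⟫_ℂ‖ := Complex.abs_re_le_norm _
        _ ≤ ‖P x‖ * ‖x‖ := norm_inner_le_norm _ _
    nlinarith

lemma aux_two_re {P Q : H →L[ℂ] H} (hP : IsSelfAdjoint P) (hQ : IsSelfAdjoint Q) (x : H) :
    Complex.re ⟪(P * Q + Q * P) x, x⟫_ℂ = 2 * Complex.re ⟪P x, Q x⟫_ℂ := by
  have e0 : (P * Q + Q * P) x = P (Q x) + Q (P x) := rfl
  rw [e0, inner_add_left, aux_symm hP (Q x) x, aux_symm hQ (P x) x, Complex.add_re]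
  have := inner_re_symm (𝕜 := ℂ) (Q x) (P x)
  simp only [RCLike.re_to_complex] at this
  rw [this]
  ring

lemma aux_lower {P Q : H →L[ℂ] H} (hP : IsSelfAdjoint P) (hP2 : P * P = P)
    (hQ : IsSelfAdjoint Q) (hQ2 : Q * Q = Q) {y : H} (hy : ‖y‖ = 1) (hQy : Q y = y)
    (ht : 0 < ‖P y‖) : ‖P y‖ + ‖P y‖ ^ 2 ≤ ‖P * Q + Q * P‖ := by
  set t : ℝ := ‖P y‖ with htdef
  set v : H := P y with hv
  set u : H := Q v with hu
  have hPv : P v = v := aux_idem hP2 y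
  have hQu : Q u = u := aux_idem hQ2 v
  have hvy : ⟪v, y⟫_ℂ = ((t : ℂ)) ^ 2 := by
    conv_lhs => rw [show v = P v from hPv.symm]
    rw [aux_symm hP v y, ← hv]
    simpa [htdef] using inner_self_eq_norm_sq_to_K (𝕜 := ℂ) v
  have hyv : ⟪y, v⟫_ℂ = ((t : ℂ)) ^ 2 := by
    rw [← inner_conj_symm, hvy]
    simp [← Complex.ofReal_pow]
  have hvu : ⟪v, u⟫_ℂ = ((‖u‖ : ℂ)) ^ 2 := by
    conv_lhs => rw [show u = Q u from hQu.symm]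
    rw [← aux_symm hQ v u, hu]
    simpa using inner_self_eq_norm_sq_to_K (𝕜 := ℂ) u
  have huy : ⟪u, y⟫_ℂ = ((t : ℂ)) ^ 2 := by
    rw [hu, aux_symm hQ v y, hQy, hvy]
  have htu : t ^ 2 ≤ ‖u‖ := by
    have h1 : ‖⟪u, y⟫_ℂ‖ ≤ ‖u‖ * ‖y‖ := norm_inner_le_norm _ _
    rw [huy, hy, mul_one] at h1
    calc t ^ 2 = ‖((t:ℂ)) ^ 2‖ := by
          rw [norm_pow, Complex.norm_real, Real.norm_eq_abs, abs_of_nonneg ht.le]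
      _ ≤ ‖u‖ := h1
  set s : ℂ := ((t⁻¹ : ℝ) : ℂ) with hs
  set x : H := y + s • v with hx
  have hti : 0 < t⁻¹ := inv_pos.mpr ht
  have hsv : ‖s • v‖ = 1 := by
    rw [norm_smul, Complex.norm_real, Real.norm_eq_abs, abs_of_nonneg hti.le]
    field_simp; exact htdef.symm
  have hyvre : Complex.re ⟪y, s • v⟫_ℂ = t := by
    rw [inner_smul_right, hyv, ← Complex.ofReal_pow, ← Complex.ofReal_mul,
      Complex.ofReal_re, pow_two, inv_mul_cancel_left₀ ht.ne']
  have hxsq : ‖x‖ ^ 2 = 2 + 2 * t := by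
    rw [hx, norm_add_sq (𝕜 := ℂ)]
    simp only [RCLike.re_to_complex]
    rw [hy, hsv, hyvre]; ring
  have hPx : P x = (1 + s) • v := by
    have e : P x = v + s • v := by rw [hx, map_add, map_smul, hPv]
    rw [e, add_smul, one_smul]
  have hQx : Q x = y + s • u := by rw [hx, map_add, map_smul, hQy]
  have hip : Complex.re ⟪P x, Q x⟫_ℂ = (1 + t⁻¹) * (t ^ 2 + t⁻¹ * ‖u‖ ^ 2) := by
    rw [hPx, hQx, inner_add_right, inner_smul_left, inner_smul_left, inner_smul_right,
      hvy, hvu]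
    have e1 : (starRingEnd ℂ) (1 + s) = ((1 + t⁻¹ : ℝ) : ℂ) := by
      rw [hs]; push_cast; simp [map_inv₀, Complex.conj_ofReal]
    have e2 : (starRingEnd ℂ) (1 + s) * ((t:ℂ)) ^ 2
        + (starRingEnd ℂ) (1 + s) * (s * ((‖u‖:ℂ)) ^ 2)
        = (((1 + t⁻¹) * (t ^ 2 + t⁻¹ * ‖u‖ ^ 2) : ℝ) : ℂ) := by
      rw [e1, hs]; push_cast; ring
    rw [e2, Complex.ofReal_re]
  have hre2 : Complex.re ⟪(P * Q + Q * P) x, x⟫_ℂ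
      = 2 * ((1 + t⁻¹) * (t ^ 2 + t⁻¹ * ‖u‖ ^ 2)) := by
    rw [aux_two_re hP hQ, hip]
  have hbound : Complex.re ⟪(P * Q + Q * P) x, x⟫_ℂ ≤ ‖P * Q + Q * P‖ * ‖x‖ ^ 2 := by
    calc Complex.re ⟪(P * Q + Q * P) x, x⟫_ℂ ≤ ‖⟪(P * Q + Q * P) x, x⟫_ℂ‖ :=
          (le_abs_self _).trans (Complex.abs_re_le_norm _)
      _ ≤ ‖(P * Q + Q * P) x‖ * ‖x‖ := norm_inner_le_norm _ _
      _ ≤ (‖P * Q + Q * P‖ * ‖x‖) * ‖x‖ := by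
          gcongr; exact (P * Q + Q * P).le_opNorm x
      _ = ‖P * Q + Q * P‖ * ‖x‖ ^ 2 := by ring
  rw [hre2, hxsq] at hbound
  have hu4 : t ^ 4 ≤ ‖u‖ ^ 2 := by nlinarith [htu, ht]
  have step1 : 2 * ((1 + t⁻¹) * (t ^ 2 + t⁻¹ * t ^ 4))
      ≤ 2 * ((1 + t⁻¹) * (t ^ 2 + t⁻¹ * ‖u‖ ^ 2)) := by
    have h1 : (0:ℝ) ≤ 1 + t⁻¹ := by positivity
    nlinarith [mul_nonneg (mul_nonneg h1 hti.le) (sub_nonneg.mpr hu4)]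
  have e3 : 2 * ((1 + t⁻¹) * (t ^ 2 + t⁻¹ * t ^ 4)) = (t + t ^ 2) * (2 + 2 * t) := by
    field_simp; ring
  rw [e3] at step1
  have h2t : (0:ℝ) < 2 + 2 * t := by linarith
  exact le_of_mul_le_mul_right (step1.trans hbound) h2t

end Aux2

/-- For orthogonal projections `P, Q` on a complex Hilbert space, the spectral radius of
`PQ + QP` equals `‖PQ‖² + ‖PQ‖`. -/
theorem spectralRadius_anticommutator
    {H : Type*} [NormedAddCommGroup H] [InnerProductSpace ℂ H] [CompleteSpace H]
    (P Q : H →L[ℂ] H) (hP : IsSelfAdjoint P) (hP2 : P * P = P)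
    (hQ : IsSelfAdjoint Q) (hQ2 : Q * Q = Q) :
    spectralRadius ℂ (P * Q + Q * P) = ENNReal.ofReal (‖P * Q‖ ^ 2 + ‖P * Q‖) := by
  have hT : IsSelfAdjoint (P * Q + Q * P) := by
    have : star (P * Q + Q * P) = P * Q + Q * P := by
      rw [star_add, star_mul, star_mul, hP.star_eq, hQ.star_eq, add_comm]
    exact this
  set c := ‖P * Q‖ with hc
  have hc0 : 0 ≤ c := norm_nonneg _
  have hQP : ‖Q * P‖ = c := by
    rw [hc, ← norm_star (P * Q), star_mul, hP.star_eq, hQ.star_eq]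
  have hc1 : c ≤ 1 := by
    apply ContinuousLinearMap.opNorm_le_bound _ zero_le_one
    intro x
    rw [one_mul]
    exact (aux_contr hP hP2 (Q x)).trans (aux_contr hQ hQ2 x)
  have hupper : ‖P * Q + Q * P‖ ≤ c + c ^ 2 := by
    apply aux_norm_le _ hT (by positivity)
    intro x
    rw [aux_two_re hP hQ x]
    set p := ‖P x‖ with hp
    set q := ‖Q x‖ with hq
    have hp0 : 0 ≤ p := norm_nonneg _
    have hq0 : 0 ≤ q := norm_nonneg _
    have habs : ‖⟪P x, Q x⟫_ℂ‖ ≤ (c * p) * q := by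
      have e : ⟪P x, Q x⟫_ℂ = ⟪Q (P x), Q x⟫_ℂ := by
        conv_lhs => rw [show Q x = Q (Q x) from (aux_idem hQ2 x).symm]
        exact (aux_symm hQ (P x) (Q x)).symm
      rw [e]
      have h1 : ‖Q (P x)‖ ≤ c * p := by
        have e2 : Q (P x) = (Q * P) (P x) := by
          show Q (P x) = Q (P (P x)); rw [aux_idem hP2]
        rw [e2, ← hQP]
        exact (Q * P).le_opNorm (P x)
      calc ‖⟪Q (P x), Q x⟫_ℂ‖ ≤ ‖Q (P x)‖ * ‖Q x‖ := norm_inner_le_norm _ _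
        _ ≤ (c * p) * q := mul_le_mul h1 le_rfl (norm_nonneg _) (by positivity)
    have hre : |Complex.re ⟪P x, Q x⟫_ℂ| ≤ (c * p) * q :=
      (Complex.abs_re_le_norm _).trans habs
    have hs1 : Complex.re ⟪P x + Q x, x⟫_ℂ = p ^ 2 + q ^ 2 := by
      rw [inner_add_left, Complex.add_re, aux_re_self hP hP2, aux_re_self hQ hQ2]
    have hs2 : p ^ 2 + q ^ 2 ≤ ‖P x + Q x‖ * ‖x‖ := by
      rw [← hs1]
      calc Complex.re ⟪P x + Q x, x⟫_ℂ ≤ ‖⟪P x + Q x, x⟫_ℂ‖ :=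
            (le_abs_self _).trans (Complex.abs_re_le_norm _)
        _ ≤ ‖P x + Q x‖ * ‖x‖ := norm_inner_le_norm _ _
    have hs3 : ‖P x + Q x‖ ^ 2 = p ^ 2 + 2 * Complex.re ⟪P x, Q x⟫_ℂ + q ^ 2 := by
      rw [norm_add_sq (𝕜 := ℂ)]; simp only [RCLike.re_to_complex]; rw [← hp, ← hq]
    have hNpq : ‖P x + Q x‖ ^ 2 ≤ (1 + c) * (p ^ 2 + q ^ 2) := by
      nlinarith [hs3, (abs_le.mp hre).2, mul_nonneg hc0 (sq_nonneg (p - q))]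
    have hS : p ^ 2 + q ^ 2 ≤ (1 + c) * ‖x‖ ^ 2 := by
      rcases eq_or_lt_of_le (by positivity : (0:ℝ) ≤ p ^ 2 + q ^ 2) with h0 | h0
      · rw [← h0]; positivity
      · have a1 : (p ^ 2 + q ^ 2) * (p ^ 2 + q ^ 2)
            ≤ (‖P x + Q x‖ * ‖x‖) * (‖P x + Q x‖ * ‖x‖) :=
          mul_self_le_mul_self (by positivity) hs2
        have a2 : ‖P x + Q x‖ ^ 2 * ‖x‖ ^ 2 ≤ ((1 + c) * (p ^ 2 + q ^ 2)) * ‖x‖ ^ 2 :=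
          mul_le_mul_of_nonneg_right hNpq (sq_nonneg _)
        have a3 : (p ^ 2 + q ^ 2) * (p ^ 2 + q ^ 2) ≤ ((1 + c) * ‖x‖ ^ 2) * (p ^ 2 + q ^ 2) := by
          nlinarith [a1, a2]
        exact le_of_mul_le_mul_right a3 h0
    have habs2 : |2 * Complex.re ⟪P x, Q x⟫_ℂ| = 2 * |Complex.re ⟪P x, Q x⟫_ℂ| := by
      rw [abs_mul, abs_two]
    rw [habs2]
    nlinarith [hre, hS, mul_nonneg hc0 (sq_nonneg (p - q)),
      mul_le_mul_of_nonneg_left hS hc0]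
  have hlow : c + c ^ 2 ≤ ‖P * Q + Q * P‖ := by
    set N := ‖P * Q + Q * P‖ with hN
    have hN0 : 0 ≤ N := norm_nonneg _
    have key : ∀ r : ℝ, 0 < r → r < c → r + r ^ 2 ≤ N := by
      intro r hr0 hrc
      obtain ⟨z, hz1, hz2⟩ := (P * Q).exists_lt_apply_of_lt_opNorm hrc
      have hw0 : Q z ≠ 0 := by
        intro h
        have e : (P * Q) z = 0 := by show P (Q z) = 0; rw [h, map_zero]
        rw [e, norm_zero] at hz2; linarith
      have hwn : 0 < ‖Q z‖ := norm_pos_iff.mpr hw0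
      set y : H := ((‖Q z‖ : ℂ))⁻¹ • (Q z) with hy'
      have hy : ‖y‖ = 1 := by
        rw [hy', norm_smul, norm_inv, Complex.norm_real, Real.norm_eq_abs, abs_of_pos hwn,
          inv_mul_cancel₀ hwn.ne']
      have hQy : Q y = y := by rw [hy', map_smul, aux_idem hQ2]
      have hPyn : r < ‖P y‖ := by
        have e : P y = ((‖Q z‖ : ℂ))⁻¹ • ((P * Q) z) := by rw [hy', map_smul]; rfl
        rw [e, norm_smul, norm_inv, Complex.norm_real, Real.norm_eq_abs, abs_of_pos hwn]
        have h1 : ‖Q z‖ ≤ 1 := (aux_contr hQ hQ2 z).trans hz1.le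
        have h2 : (1:ℝ) ≤ ‖Q z‖⁻¹ := (one_le_inv₀ hwn).mpr h1
        calc r < ‖(P * Q) z‖ := hz2
          _ = 1 * ‖(P * Q) z‖ := (one_mul _).symm
          _ ≤ ‖Q z‖⁻¹ * ‖(P * Q) z‖ := mul_le_mul_of_nonneg_right h2 (norm_nonneg _)
      have hky := aux_lower hP hP2 hQ hQ2 hy hQy (lt_trans hr0 hPyn)
      nlinarith [hky, hPyn, hr0]
    rcases eq_or_lt_of_le hc0 with hcz | hcpos
    · rw [← hcz]; simpa using hN0
    apply le_of_forall_pos_le_add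
    intro ε hε
    by_cases hce : c ≤ ε / 3
    · nlinarith [hN0, hc1, hcpos, hε]
    push_neg at hce
    have hr := key (c - ε / 3) (by linarith) (by linarith)
    nlinarith [hr, hc1, hε]
  have hnorm : ‖P * Q + Q * P‖ = c ^ 2 + c :=
    le_antisymm (by linarith) (by linarith)
  rw [hT.spectralRadius_eq_nnnorm, ← enorm_eq_nnnorm, ← ofReal_norm, hnorm]
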